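/- Let t be a real random variable on a probability space, let (Z, μ_Z) be a probability space, and let A, B, q : Z → ℝ be integrable with a := ∫|A| dμ_Z > 0, b := ∫|B| dμ_Z, and r := ∫|q| dμ_Z. Then for every c > 0 and β > 0, P( μ_Z({z : A(z)·t + B(z) + q(z) ≥ c}) ≥ β ) ≤ P( |t| ≥ (β·c − b)/a − r/a ). In particular, if the CDF F of |t| is continuous and strictly increasing on [0,∞) and α := 1 − F((β·c − b)/a) ∈ (0,1), then the left-hand side is at most 1 − F( F⁻¹(1 − α) − r/a ). -/

import Mathlib

open MeasureTheory

private lemma rmia_pointwise {Z : Type*} [MeasurableSpace Z]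
    (μZ : Measure Z) [IsProbabilityMeasure μZ]
    (A B q : Z → ℝ) (hA : Integrable A μZ) (hB : Integrable B μZ) (hq : Integrable q μZ)
    (a b r : ℝ) (ha : a = ∫ z, |A z| ∂μZ) (hb : b = ∫ z, |B z| ∂μZ)
    (hr : r = ∫ z, |q z| ∂μZ) (hapos : 0 < a)
    (c β : ℝ) (hc : 0 < c)
    (τ : ℝ) (hτ : β ≤ (μZ {z | A z * τ + B z + q z ≥ c}).toReal) :
    (β * c - b) / a - r / a ≤ |τ| := by
  obtain ⟨A', hA'm, hA'ae⟩ := hA.1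
  obtain ⟨B', hB'm, hB'ae⟩ := hB.1
  obtain ⟨q', hq'm, hq'ae⟩ := hq.1
  have hA' : Integrable A' μZ := hA.congr hA'ae
  have hB' : Integrable B' μZ := hB.congr hB'ae
  have hq' : Integrable q' μZ := hq.congr hq'ae
  set S' : Set Z := {z | A' z * τ + B' z + q' z ≥ c} with hS'
  have hS'meas : MeasurableSet S' := by
    have : Measurable fun z => A' z * τ + B' z + q' z :=
      ((hA'm.measurable.mul_const τ).add hB'm.measurable).add hq'm.measurable
    exact measurableSet_le measurable_const this
  have hSeq : μZ {z | A z * τ + B z + q z ≥ c} = μZ S' := by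
    apply measure_congr
    filter_upwards [hA'ae, hB'ae, hq'ae] with z e1 e2 e3
    show (c ≤ A z * τ + B z + q z) = (c ≤ A' z * τ + B' z + q' z)
    rw [e1, e2, e3]
  set f : Z → ℝ := fun z => A' z * τ + B' z + q' z with hf
  have hfint : Integrable f μZ := ((hA'.mul_const τ).add hB').add hq'
  have h1 : β * c ≤ c * (μZ S').toReal := by
    rw [hSeq] at hτ
    calc β * c ≤ (μZ S').toReal * c :=
          mul_le_mul_of_nonneg_right hτ hc.le
      _ = c * (μZ S').toReal := mul_comm _ _
  have h2 : c * (μZ S').toReal ≤ ∫ z in S', f z ∂μZ :=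
    setIntegral_ge_of_const_le_real hS'meas (measure_ne_top _ _) (fun z hz => hz)
      hfint.integrableOn
  have h3 : ∫ z in S', f z ∂μZ ≤ ∫ z, |f z| ∂μZ := by
    calc ∫ z in S', f z ∂μZ ≤ ∫ z in S', |f z| ∂μZ :=
          integral_mono hfint.integrableOn hfint.abs.integrableOn
            (fun z => le_abs_self _)
      _ ≤ ∫ z, |f z| ∂μZ :=
          setIntegral_le_integral hfint.abs (Filter.Eventually.of_forall fun z => abs_nonneg _)
  have hgint : Integrable (fun z => |A' z| * |τ| + |B' z| + |q' z|) μZ :=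
    ((hA'.abs.mul_const |τ|).add hB'.abs).add hq'.abs
  have h4 : ∫ z, |f z| ∂μZ ≤ ∫ z, (|A' z| * |τ| + |B' z| + |q' z|) ∂μZ := by
    apply integral_mono hfint.abs hgint
    intro z
    calc |f z| ≤ |A' z * τ + B' z| + |q' z| := abs_add_le _ _
      _ ≤ |A' z * τ| + |B' z| + |q' z| := by linarith [abs_add_le (A' z * τ) (B' z)]
      _ = |A' z| * |τ| + |B' z| + |q' z| := by rw [abs_mul]
  have hIA : ∫ z, |A' z| ∂μZ = a := by
    rw [ha]; exact integral_congr_ae (by filter_upwards [hA'ae] with z e; rw [e])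
  have hIB : ∫ z, |B' z| ∂μZ = b := by
    rw [hb]; exact integral_congr_ae (by filter_upwards [hB'ae] with z e; rw [e])
  have hIq : ∫ z, |q' z| ∂μZ = r := by
    rw [hr]; exact integral_congr_ae (by filter_upwards [hq'ae] with z e; rw [e])
  have i1 : Integrable (fun z => |A' z| * |τ| + |B' z|) μZ :=
    (hA'.abs.mul_const _).add hB'.abs
  have i2 : Integrable (fun z => |A' z| * |τ|) μZ := hA'.abs.mul_const _
  have h5 : ∫ z, (|A' z| * |τ| + |B' z| + |q' z|) ∂μZ = a * |τ| + b + r := by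
    rw [integral_add i1 hq'.abs, integral_add i2 hB'.abs, integral_mul_const,
        hIA, hIB, hIq]
  have hmain : β * c ≤ a * |τ| + b + r := by
    calc β * c ≤ c * (μZ S').toReal := h1
      _ ≤ ∫ z in S', f z ∂μZ := h2
      _ ≤ ∫ z, |f z| ∂μZ := h3
      _ ≤ ∫ z, (|A' z| * |τ| + |B' z| + |q' z|) ∂μZ := h4
      _ = a * |τ| + b + r := h5
  have : (β * c - b) / a - r / a = (β * c - b - r) / a := by ring
  rw [this, div_le_iff₀ hapos]
  linarith

theorem stmt_11 {Ω Z : Type*} [MeasurableSpace Ω] [MeasurableSpace Z]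
    (P : Measure Ω) [IsProbabilityMeasure P] (μZ : Measure Z) [IsProbabilityMeasure μZ]
    (t : Ω → ℝ) (ht : Measurable t)
    (A B q : Z → ℝ) (hA : Integrable A μZ) (hB : Integrable B μZ) (hq : Integrable q μZ)
    (a b r : ℝ) (ha : a = ∫ z, |A z| ∂μZ) (hb : b = ∫ z, |B z| ∂μZ)
    (hr : r = ∫ z, |q z| ∂μZ) (hapos : 0 < a)
    (c β : ℝ) (hc : 0 < c) (hβ : 0 < β) :
    P {ω | (μZ {z | A z * t ω + B z + q z ≥ c}).toReal ≥ β} ≤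
        P {ω | |t ω| ≥ (β * c - b) / a - r / a} ∧
      ∀ (F : ℝ → ℝ) (α u : ℝ),
        (∀ v, F v = (P {ω | |t ω| ≤ v}).toReal) → Continuous F →
        StrictMonoOn F (Set.Ici (0 : ℝ)) →
        α = 1 - F ((β * c - b) / a) → α ∈ Set.Ioo (0 : ℝ) 1 →
        0 ≤ u → F u = 1 - α →
        (P {ω | (μZ {z | A z * t ω + B z + q z ≥ c}).toReal ≥ β}).toReal ≤
          1 - F (u - r / a) := by
  have hsub : {ω | (μZ {z | A z * t ω + B z + q z ≥ c}).toReal ≥ β} ⊆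
      {ω | |t ω| ≥ (β * c - b) / a - r / a} := by
    intro ω hω
    exact rmia_pointwise μZ A B q hA hB hq a b r ha hb hr hapos c β hc (t ω) hω
  have hpart1 : P {ω | (μZ {z | A z * t ω + B z + q z ≥ c}).toReal ≥ β} ≤
      P {ω | |t ω| ≥ (β * c - b) / a - r / a} := measure_mono hsub
  refine ⟨hpart1, ?_⟩
  intro F α u hF hFcont hFmono hα hαIoo hu hFu
  set s : ℝ := (β * c - b) / a with hs
  have hs0 : 0 ≤ s := by
    by_contra h
    push_neg at h
    have hempty : {ω | |t ω| ≤ s} = ∅ := by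
      ext ω
      simp only [Set.mem_setOf_eq, Set.mem_empty_iff_false, iff_false, not_le]
      exact lt_of_lt_of_le h (abs_nonneg _)
    have : F s = 0 := by rw [hF s, hempty, measure_empty, ENNReal.toReal_zero]
    rw [this] at hα
    linarith [hαIoo.2]
  have hus : u = s := by
    apply hFmono.injOn (Set.mem_Ici.mpr hu) (Set.mem_Ici.mpr hs0)
    rw [hFu, hα]; ring
  set w : ℝ := u - r / a with hw
  have hws : w = s - r / a := by rw [hw, hus]
  -- bound P{|t| ≥ w}.toReal ≤ 1 - F w via left limits
  have key : ∀ v < w, (P {ω | |t ω| ≥ w}).toReal ≤ 1 - F v := by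
    intro v hv
    have hmono : P {ω | |t ω| ≥ w} ≤ P ({ω | |t ω| ≤ v}ᶜ) := by
      apply measure_mono
      intro ω hω
      simp only [Set.mem_compl_iff, Set.mem_setOf_eq, not_le]
      exact lt_of_lt_of_le hv hω
    have hmeas : MeasurableSet {ω | |t ω| ≤ v} :=
      measurableSet_le ht.abs measurable_const
    have hcompl : P ({ω | |t ω| ≤ v}ᶜ) = 1 - P {ω | |t ω| ≤ v} := by
      rw [measure_compl hmeas (measure_ne_top _ _), measure_univ]
    have htr : (P ({ω | |t ω| ≤ v}ᶜ)).toReal = 1 - F v := by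
      rw [hcompl, ENNReal.toReal_sub_of_le prob_le_one ENNReal.one_ne_top,
        ENNReal.toReal_one, hF v]
    calc (P {ω | |t ω| ≥ w}).toReal ≤ (P ({ω | |t ω| ≤ v}ᶜ)).toReal :=
          ENNReal.toReal_mono (measure_ne_top _ _) hmono
      _ = 1 - F v := htr
  have hlimit : (P {ω | |t ω| ≥ w}).toReal ≤ 1 - F w := by
    have htend : Filter.Tendsto (fun v => 1 - F v) (nhdsWithin w (Set.Iio w))
        (nhds (1 - F w)) :=
      ((continuous_const.sub hFcont).tendsto w).mono_left nhdsWithin_le_nhds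
    exact ge_of_tendsto htend
      (Filter.eventually_of_mem self_mem_nhdsWithin fun v hv => key v hv)
  calc (P {ω | (μZ {z | A z * t ω + B z + q z ≥ c}).toReal ≥ β}).toReal
      ≤ (P {ω | |t ω| ≥ (β * c - b) / a - r / a}).toReal :=
        ENNReal.toReal_mono (measure_ne_top _ _) hpart1
    _ = (P {ω | |t ω| ≥ w}).toReal := by rw [hws]
    _ ≤ 1 - F w := hlimit
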